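/- For s ≥ 3 and t ≥ 1, the complement of K_{s,s}^− ⊛ J_t is a connected st-regular graph on 2st vertices with spectrum {[st]^1, [st−2t]^1, [−2t]^{s−1}, [0]^{2st−s−1}}; in particular it has four distinct eigenvalues, exactly two simple, and 0 as a non-simple eigenvalue. -/

import Mathlib

open Polynomial

noncomputable def adjm {V : Type*} [Fintype V] [DecidableEq V] (G : SimpleGraph V) :
    Matrix V V ℝ :=
  @SimpleGraph.adjMatrix ℝ V G (Classical.decRel _) _ _

/-- The adjacency spectrum of `G`, as a multiset of real roots of the
characteristic polynomial (so multiplicities are counted). -/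
noncomputable def spec {V : Type*} [Fintype V] [DecidableEq V] (G : SimpleGraph V) :
    Multiset ℝ :=
  (adjm G).charpoly.roots

/-- `G` is `k`-regular: every vertex has exactly `k` neighbours. -/
def IsReg {V : Type*} (G : SimpleGraph V) (k : ℕ) : Prop :=
  ∀ v : V, (G.neighborSet v).ncard = k
/-- The clique blow-up `G ⊛ J_t`. -/
def blowup {V : Type*} (G : SimpleGraph V) (t : ℕ) : SimpleGraph (V × Fin t) where
  Adj x y := G.Adj x.1 y.1 ∨ (x.1 = y.1 ∧ x.2 ≠ y.2)
  symm := by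
    constructor
    rintro ⟨u, i⟩ ⟨v, j⟩ (h | ⟨h, hij⟩)
    · exact Or.inl h.symm
    · exact Or.inr ⟨h.symm, hij.symm⟩
  loopless := by constructor; rintro ⟨u, i⟩ (h | ⟨-, h⟩) <;> simp_all

/-- `K_{s,s}⁻`: the complete bipartite graph `K_{s,s}` minus a perfect matching. -/
def KssMinus (s : ℕ) : SimpleGraph (Fin s ⊕ Fin s) where
  Adj x y :=
    match x, y with
    | .inl i, .inr j => i ≠ j
    | .inr i, .inl j => i ≠ j
    | _, _ => False
  symm := by constructor; rintro (i | i) (j | j) h <;> simp_all <;> exact fun e => h e.symm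
  loopless := by constructor; rintro (i | i) h <;> simp_all


open Matrix Polynomial

noncomputable section
namespace SpecAux

variable (n : ℕ) [NeZero n]

def ev : Fin n → ℝ := fun i => if i = 0 then 1 else 0
def ov : Fin n → ℝ := fun _ => 1

def Jmat : Matrix (Fin n) (Fin n) ℝ := vecMulVec (ov n) (ov n)
def Pmat : Matrix (Fin n) (Fin n) ℝ :=
  1 + vecMulVec (ov n) (ev n) - vecMulVec (ev n) (ov n)
def Qmat : Matrix (Fin n) (Fin n) ℝ :=
  1 - (n:ℝ)⁻¹ • vecMulVec (ov n) (ov n) + (2*(n:ℝ)⁻¹) • vecMulVec (ev n) (ov n)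
    - vecMulVec (ev n) (ev n)
def dv : Fin n → ℝ := fun i => if i = 0 then (n:ℝ) else 0
def Dmat : Matrix (Fin n) (Fin n) ℝ := diagonal (dv n)

lemma vmv_mul {a b c d : Fin n → ℝ} :
    vecMulVec a b * vecMulVec c d = (b ⬝ᵥ c) • vecMulVec a d := by
  ext i j
  simp only [mul_apply, vecMulVec_apply, Matrix.smul_apply, dotProduct, smul_eq_mul, Finset.sum_mul]
  exact Finset.sum_congr rfl fun k _ => by ring

lemma dot_oo : (ov n) ⬝ᵥ (ov n) = (n : ℝ) := by
  simp [dotProduct, ov]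

lemma dot_eo : (ev n) ⬝ᵥ (ov n) = 1 := by
  simp [dotProduct, ev, ov]

lemma dot_oe : (ov n) ⬝ᵥ (ev n) = 1 := by
  simp [dotProduct, ev, ov]

lemma dot_ee : (ev n) ⬝ᵥ (ev n) = 1 := by
  simp [dotProduct, ev, ite_and]

lemma vmv_ee : vecMulVec (ev n) (ev n) = diagonal (ev n) := by
  ext i j
  rcases eq_or_ne i j with rfl | h
  · simp only [vecMulVec_apply, diagonal_apply_eq, ev]
    split <;> simp
  · rw [diagonal_apply_ne _ h]
    simp only [vecMulVec_apply, ev]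
    rcases eq_or_ne i 0 with rfl | hi
    · have hj : ¬ (j = 0) := fun hj => h (by simp [hj])
      simp [hj]
    · simp [hi]

lemma Dmat_eq : Dmat n = (n:ℝ) • vecMulVec (ev n) (ev n) := by
  rw [Dmat, vmv_ee]
  ext i j
  rcases eq_or_ne i j with rfl | h
  · simp only [diagonal_apply_eq, Matrix.smul_apply, smul_eq_mul, dv, ev]
    split <;> simp
  · simp [diagonal_apply_ne _ h]

lemma Pmat_mul_Qmat : Pmat n * Qmat n = 1 := by
  have hn : (n:ℝ) ≠ 0 := Nat.cast_ne_zero.mpr (NeZero.ne n)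
  rw [Pmat, Qmat]
  simp only [mul_add, add_mul, mul_sub, sub_mul, Matrix.mul_smul, Matrix.smul_mul,
    vmv_mul, dot_oo, dot_eo, dot_oe, dot_ee, Matrix.one_mul, Matrix.mul_one, one_smul]
  match_scalars <;> (try field_simp) <;> try norm_num

lemma Jmat_mul_Pmat : Jmat n * Pmat n = Pmat n * Dmat n := by
  rw [Jmat, Pmat, Dmat_eq]
  simp only [mul_add, add_mul, mul_sub, sub_mul, Matrix.mul_smul, Matrix.smul_mul,
    vmv_mul, dot_oo, dot_eo, dot_oe, dot_ee, Matrix.one_mul, Matrix.mul_one, one_smul]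
  match_scalars <;> ring

end SpecAux

noncomputable section
namespace SpecAux

variable (s : ℕ) [NeZero s]

def Bs : Matrix (Fin s ⊕ Fin s) (Fin s ⊕ Fin s) ℝ :=
  Matrix.fromBlocks (Jmat s - 1) 1 1 (Jmat s - 1)
def PB : Matrix (Fin s ⊕ Fin s) (Fin s ⊕ Fin s) ℝ :=
  Matrix.fromBlocks (Pmat s) (Pmat s) (Pmat s) (-(Pmat s))
def QB : Matrix (Fin s ⊕ Fin s) (Fin s ⊕ Fin s) ℝ :=
  (2:ℝ)⁻¹ • Matrix.fromBlocks (Qmat s) (Qmat s) (Qmat s) (-(Qmat s))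
def dB : Fin s ⊕ Fin s → ℝ := Sum.elim (dv s) (fun i => dv s i - 2)
def DB : Matrix (Fin s ⊕ Fin s) (Fin s ⊕ Fin s) ℝ := Matrix.diagonal (dB s)

lemma DB_blocks : DB s = Matrix.fromBlocks (Dmat s) 0 0 (Dmat s - (2:ℝ) • 1) := by
  have h2 : (Matrix.diagonal fun i => dv s i - 2) = Dmat s - (2:ℝ) • (1: Matrix (Fin s) (Fin s) ℝ) := by
    rw [Dmat]
    ext i j
    rcases eq_or_ne i j with rfl | h
    · simp
    · simp [Matrix.diagonal_apply_ne _ h, Matrix.one_apply_ne h]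
  rw [DB, dB, ← Matrix.fromBlocks_diagonal, h2, Dmat]

lemma PB_mul_QB : PB s * QB s = 1 := by
  have h1 : (2:ℝ)⁻¹ • ((1:Matrix (Fin s) (Fin s) ℝ) + 1) = 1 := by
    rw [← two_smul ℝ (1:Matrix (Fin s) (Fin s) ℝ), smul_smul]
    norm_num
  rw [PB, QB, Matrix.mul_smul, Matrix.fromBlocks_multiply]
  simp only [Matrix.mul_neg, Matrix.neg_mul, neg_neg, Pmat_mul_Qmat, add_neg_cancel,
    Matrix.fromBlocks_smul, smul_zero, h1, Matrix.fromBlocks_one]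

lemma Bs_mul_PB : Bs s * PB s = PB s * DB s := by
  have h := Jmat_mul_Pmat s
  have e1 : (Jmat s - 1) * Pmat s = Pmat s * Dmat s - Pmat s := by
    rw [Matrix.sub_mul, Matrix.one_mul, h]
  rw [Bs, PB, DB_blocks, Matrix.fromBlocks_multiply, Matrix.fromBlocks_multiply]
  refine Matrix.fromBlocks_inj.mpr ⟨?_, ?_, ?_, ?_⟩
  · rw [e1, Matrix.one_mul, Matrix.mul_zero]
    abel
  · rw [e1, Matrix.one_mul, Matrix.mul_zero, Matrix.mul_sub, Matrix.mul_smul, Matrix.mul_one]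
    module
  · rw [e1, Matrix.one_mul]
    simp only [Matrix.neg_mul, Matrix.mul_zero, neg_zero, add_zero]
    abel
  · rw [Matrix.mul_neg, e1]
    simp only [Matrix.one_mul, Matrix.neg_mul, Matrix.mul_zero, neg_zero, zero_add,
      Matrix.mul_sub, Matrix.mul_smul, Matrix.mul_one, Matrix.mul_neg]
    module

end SpecAux

noncomputable section
namespace SpecAux

variable {m : Type*} [Fintype m] [DecidableEq m]

lemma charpoly_similar (P D Q M : Matrix m m ℝ) (h1 : P * Q = 1) (hM : M = P * D * Q) :
    M.charpoly = D.charpoly := by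
  have h2 : Q * P = 1 := mul_eq_one_comm.mp h1
  have hC : (P.map (C : ℝ →+* ℝ[X])) * (Q.map C) = 1 := by
    rw [← Matrix.map_mul, h1, Matrix.map_one _ (map_zero C) (map_one C)]
  unfold Matrix.charpoly charmatrix
  have key : Matrix.scalar m (X : ℝ[X]) - (RingHom.mapMatrix (C : ℝ →+* ℝ[X])) M =
      (P.map C) * (Matrix.scalar m (X : ℝ[X]) - (RingHom.mapMatrix (C : ℝ →+* ℝ[X])) D) *
        (Q.map C) := by
    rw [Matrix.mul_sub, Matrix.sub_mul]
    congr 1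
    · have hc : Commute (Matrix.scalar m (X : ℝ[X])) (P.map (C : ℝ →+* ℝ[X])) :=
        Matrix.scalar_commute (X : ℝ[X]) (fun r' => Commute.all _ _) _
      rw [← hc.eq, mul_assoc, hC, mul_one]
    · simp only [RingHom.mapMatrix_apply, hM, Matrix.map_mul]
  have hC2 : (Q.map (C : ℝ →+* ℝ[X])) * (P.map C) = 1 := mul_eq_one_comm.mp hC
  rw [key, Matrix.det_mul, Matrix.det_mul, mul_comm, ← mul_assoc, ← Matrix.det_mul, hC2]
  simp

lemma charpoly_diagonal (d : m → ℝ) :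
    (Matrix.diagonal d).charpoly = ∏ i, (X - C (d i)) := by
  have : charmatrix (Matrix.diagonal d) = Matrix.diagonal fun i => (X : ℝ[X]) - C (d i) := by
    ext i j : 2
    rcases eq_or_ne i j with rfl | h
    · rw [charmatrix_apply_eq, Matrix.diagonal_apply_eq, Matrix.diagonal_apply_eq]
    · simp [charmatrix_apply_ne _ _ _ h, Matrix.diagonal_apply_ne _ h]
  rw [Matrix.charpoly, this, Matrix.det_diagonal]

end SpecAux


noncomputable section
namespace SpecAux

open Kronecker

variable (s t : ℕ) [NeZero s] [NeZero t]

lemma blowup_adj {V : Type*} (G : SimpleGraph V) (t : ℕ) (x y : V × Fin t) :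
    (blowup G t).Adj x y ↔ (G.Adj x.1 y.1 ∨ (x.1 = y.1 ∧ x.2 ≠ y.2)) := Iff.rfl

lemma kss_ll (i j : Fin s) : (KssMinus s).Adj (Sum.inl i) (Sum.inl j) ↔ False := Iff.rfl
lemma kss_rr (i j : Fin s) : (KssMinus s).Adj (Sum.inr i) (Sum.inr j) ↔ False := Iff.rfl
lemma kss_lr (i j : Fin s) : (KssMinus s).Adj (Sum.inl i) (Sum.inr j) ↔ i ≠ j := Iff.rfl
lemma kss_rl (i j : Fin s) : (KssMinus s).Adj (Sum.inr i) (Sum.inl j) ↔ i ≠ j := Iff.rfl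

lemma cadj_ll (i j : Fin s) (a b : Fin t) :
    (blowup (KssMinus s) t)ᶜ.Adj (Sum.inl i, a) (Sum.inl j, b) ↔ i ≠ j := by
  rw [SimpleGraph.compl_adj, blowup_adj]
  simp only [kss_ll, Prod.mk.injEq, Sum.inl.injEq, not_or, ne_eq]
  tauto

lemma cadj_rr (i j : Fin s) (a b : Fin t) :
    (blowup (KssMinus s) t)ᶜ.Adj (Sum.inr i, a) (Sum.inr j, b) ↔ i ≠ j := by
  rw [SimpleGraph.compl_adj, blowup_adj]
  simp only [kss_rr, Prod.mk.injEq, Sum.inr.injEq, not_or, ne_eq]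
  tauto

lemma cadj_lr (i j : Fin s) (a b : Fin t) :
    (blowup (KssMinus s) t)ᶜ.Adj (Sum.inl i, a) (Sum.inr j, b) ↔ i = j := by
  rw [SimpleGraph.compl_adj, blowup_adj]
  simp only [kss_lr, Prod.mk.injEq, not_or, ne_eq, not_not]
  simp

lemma cadj_rl (i j : Fin s) (a b : Fin t) :
    (blowup (KssMinus s) t)ᶜ.Adj (Sum.inr i, a) (Sum.inl j, b) ↔ i = j := by
  rw [SimpleGraph.compl_adj, blowup_adj]
  simp only [kss_rl, Prod.mk.injEq, not_or, ne_eq, not_not]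
  simp

lemma adjm_eq : adjm (blowup (KssMinus s) t)ᶜ = Bs s ⊗ₖ Jmat t := by
  ext ⟨u, a⟩ ⟨v, b⟩
  rw [adjm, SimpleGraph.adjMatrix_apply, Matrix.kroneckerMap_apply]
  have hJ : Jmat t a b = 1 := by simp [Jmat, vecMulVec_apply, ov]
  rw [hJ, mul_one]
  rcases u with i | i <;> rcases v with j | j
  · rw [Bs, Matrix.fromBlocks_apply₁₁]
    simp only [cadj_ll]
    by_cases h : i = j <;>
      simp [h, Jmat, vecMulVec_apply, ov, Matrix.one_apply, Matrix.sub_apply]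
  · rw [Bs, Matrix.fromBlocks_apply₁₂]
    simp only [cadj_lr]
    by_cases h : i = j <;> simp [h, Matrix.one_apply]
  · rw [Bs, Matrix.fromBlocks_apply₂₁]
    simp only [cadj_rl]
    by_cases h : i = j <;> simp [h, Matrix.one_apply]
  · rw [Bs, Matrix.fromBlocks_apply₂₂]
    simp only [cadj_rr]
    by_cases h : i = j <;>
      simp [h, Jmat, vecMulVec_apply, ov, Matrix.one_apply, Matrix.sub_apply]

lemma charpoly_eq :
    (adjm (blowup (KssMinus s) t)ᶜ).charpoly =
      ∏ p : (Fin s ⊕ Fin s) × Fin t, (X - C (dB s p.1 * dv t p.2)) := by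
  set A := adjm (blowup (KssMinus s) t)ᶜ with hA
  have hPQ : (PB s ⊗ₖ Pmat t) * (QB s ⊗ₖ Qmat t) = 1 := by
    rw [← Matrix.mul_kronecker_mul, PB_mul_QB, Pmat_mul_Qmat, Matrix.one_kronecker_one]
  have hAP : A * (PB s ⊗ₖ Pmat t) = (PB s ⊗ₖ Pmat t) * (DB s ⊗ₖ Dmat t) := by
    rw [hA, adjm_eq, ← Matrix.mul_kronecker_mul, Bs_mul_PB, Jmat_mul_Pmat,
      Matrix.mul_kronecker_mul]
  have hM : A = (PB s ⊗ₖ Pmat t) * (DB s ⊗ₖ Dmat t) * (QB s ⊗ₖ Qmat t) := by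
    calc A = A * ((PB s ⊗ₖ Pmat t) * (QB s ⊗ₖ Qmat t)) := by rw [hPQ, mul_one]
    _ = (A * (PB s ⊗ₖ Pmat t)) * (QB s ⊗ₖ Qmat t) := by rw [mul_assoc]
    _ = _ := by rw [hAP]
  have hdiag : (DB s ⊗ₖ Dmat t) = Matrix.diagonal (fun p : (Fin s ⊕ Fin s) × Fin t =>
      dB s p.1 * dv t p.2) := by
    rw [DB, Dmat, Matrix.diagonal_kronecker_diagonal]
  rw [charpoly_similar _ _ _ _ hPQ hM, hdiag, charpoly_diagonal]

end SpecAux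
end

noncomputable section
namespace SpecAux

variable (s t : ℕ) [NeZero s] [NeZero t]

lemma connected_aux (hs : 3 ≤ s) (ht : 1 ≤ t) : (blowup (KssMinus s) t)ᶜ.Connected := by
  have h01 : (⟨0, by omega⟩ : Fin s) ≠ ⟨1, by omega⟩ := by simp [Fin.ext_iff]
  haveI : Nonempty ((Fin s ⊕ Fin s) × Fin t) := ⟨(Sum.inl ⟨0, by omega⟩, ⟨0, by omega⟩)⟩
  refine ⟨?_⟩
  have hl : ∀ (i : Fin s) (a : Fin t),
      (blowup (KssMinus s) t)ᶜ.Reachable (Sum.inl i, a) (Sum.inl ⟨0, by omega⟩, ⟨0, by omega⟩) := by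
    intro i a
    by_cases h : i = ⟨0, by omega⟩
    · subst h
      exact ((cadj_ll s t _ _ a a).mpr h01).reachable.trans
        ((cadj_ll s t _ _ a ⟨0, by omega⟩).mpr h01.symm).reachable
    · exact ((cadj_ll s t i ⟨0, by omega⟩ a ⟨0, by omega⟩).mpr h).reachable
  have base : ∀ z : (Fin s ⊕ Fin s) × Fin t,
      (blowup (KssMinus s) t)ᶜ.Reachable z (Sum.inl ⟨0, by omega⟩, ⟨0, by omega⟩) := by
    rintro ⟨i | i, a⟩
    · exact hl i a
    · exact ((cadj_rl s t i i a a).mpr rfl).reachable.trans (hl i a)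
  intro x y
  exact (base x).trans (base y).symm

lemma isreg_aux (hs : 3 ≤ s) (ht : 1 ≤ t) : IsReg (blowup (KssMinus s) t)ᶜ (s * t) := by
  classical
  rintro ⟨i | i, a⟩
  · have hset : (blowup (KssMinus s) t)ᶜ.neighborSet (Sum.inl i, a) =
        ↑((((Finset.univ.erase i).image Sum.inl) ∪ {Sum.inr i}) ×ˢ
          (Finset.univ : Finset (Fin t))) := by
      ext ⟨w, b⟩
      rcases w with j | j
      · simp only [SimpleGraph.mem_neighborSet, cadj_ll, Finset.coe_product,
          Set.mem_prod, Finset.mem_coe, Finset.mem_union, Finset.mem_image,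
          Finset.mem_erase, Finset.mem_singleton, Finset.mem_univ, and_true,
          Set.mem_setOf_eq]
        aesop
      · simp only [SimpleGraph.mem_neighborSet, cadj_lr, Finset.coe_product,
          Set.mem_prod, Finset.mem_coe, Finset.mem_union, Finset.mem_image,
          Finset.mem_erase, Finset.mem_singleton, Finset.mem_univ, and_true,
          Set.mem_setOf_eq]
        aesop
    rw [hset, Set.ncard_coe_finset, Finset.card_product]
    have hcard : (((Finset.univ.erase i).image Sum.inl) ∪
        ({Sum.inr i} : Finset (Fin s ⊕ Fin s))).card = s := by
      rw [Finset.card_union_of_disjoint (by simp),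
        Finset.card_image_of_injective _ Sum.inl_injective,
        Finset.card_erase_of_mem (Finset.mem_univ i), Finset.card_univ, Fintype.card_fin,
        Finset.card_singleton]
      omega
    rw [hcard, Finset.card_univ, Fintype.card_fin]
  · have hset : (blowup (KssMinus s) t)ᶜ.neighborSet (Sum.inr i, a) =
        ↑((((Finset.univ.erase i).image Sum.inr) ∪ {Sum.inl i}) ×ˢ
          (Finset.univ : Finset (Fin t))) := by
      ext ⟨w, b⟩
      rcases w with j | j
      · simp only [SimpleGraph.mem_neighborSet, cadj_rl, Finset.coe_product,
          Set.mem_prod, Finset.mem_coe, Finset.mem_union, Finset.mem_image,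
          Finset.mem_erase, Finset.mem_singleton, Finset.mem_univ, and_true,
          Set.mem_setOf_eq]
        aesop
      · simp only [SimpleGraph.mem_neighborSet, cadj_rr, Finset.coe_product,
          Set.mem_prod, Finset.mem_coe, Finset.mem_union, Finset.mem_image,
          Finset.mem_erase, Finset.mem_singleton, Finset.mem_univ, and_true,
          Set.mem_setOf_eq]
        aesop
    rw [hset, Set.ncard_coe_finset, Finset.card_product]
    have hcard : (((Finset.univ.erase i).image Sum.inr) ∪
        ({Sum.inl i} : Finset (Fin s ⊕ Fin s))).card = s := by
      rw [Finset.card_union_of_disjoint (by simp),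
        Finset.card_image_of_injective _ Sum.inr_injective,
        Finset.card_erase_of_mem (Finset.mem_univ i), Finset.card_univ, Fintype.card_fin,
        Finset.card_singleton]
      omega
    rw [hcard, Finset.card_univ, Fintype.card_fin]

end SpecAux
end

/-- For `s ≥ 3`, `t ≥ 1`, the complement of `K_{s,s}⁻ ⊛ J_t` is a connected
`st`-regular graph on `2st` vertices with spectrum
`{[st]^1, [st-2t]^1, [-2t]^{s-1}, [0]^{2st-s-1}}`; in particular it has four distinct
eigenvalues, exactly two of them simple, and `0` as a non-simple eigenvalue. -/
theorem stmt_19 (s t : ℕ) (hs : 3 ≤ s) (ht : 1 ≤ t) :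
    (blowup (KssMinus s) t)ᶜ.Connected ∧
    IsReg (blowup (KssMinus s) t)ᶜ (s * t) ∧
    spec (blowup (KssMinus s) t)ᶜ =
      {((s : ℝ) * t : ℝ), ((s : ℝ) * t - 2 * t : ℝ)} +
        Multiset.replicate (s - 1) (-2 * (t : ℝ)) +
        Multiset.replicate (2 * s * t - s - 1) (0 : ℝ) ∧
    (spec (blowup (KssMinus s) t)ᶜ).toFinset.card = 4 ∧
    (spec (blowup (KssMinus s) t)ᶜ).count ((s : ℝ) * t) = 1 ∧
    (spec (blowup (KssMinus s) t)ᶜ).count ((s : ℝ) * t - 2 * t) = 1 ∧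
    2 ≤ (spec (blowup (KssMinus s) t)ᶜ).count (0 : ℝ) := by
  obtain ⟨s', rfl⟩ : ∃ s', s = s' + 1 := ⟨s - 1, by omega⟩
  obtain ⟨t', rfl⟩ : ∃ t', t = t' + 1 := ⟨t - 1, by omega⟩
  set S : ℝ := ((s' + 1 : ℕ) : ℝ) with hSdef
  set T : ℝ := ((t' + 1 : ℕ) : ℝ) with hTdef
  have hT1 : (1:ℝ) ≤ T := by rw [hTdef]; exact_mod_cast ht
  have hS3 : (3:ℝ) ≤ S := by rw [hSdef]; exact_mod_cast hs
  have hTpos : (0:ℝ) < T := by linarith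
  have hM : 2 * (s'+1) * (t'+1) - (s'+1) - 1 = s' + t' * ((s'+1) + (s'+1)) := by
    have h : 2 * (s'+1) * (t'+1) = s' + t' * ((s'+1) + (s'+1)) + (s'+1) + 1 := by ring
    generalize hw : t' * ((s'+1) + (s'+1)) = w at h ⊢
    omega
  have hMge : 2 ≤ 2 * (s'+1) * (t'+1) - (s'+1) - 1 := by
    rw [hM]; omega
  have ne1 : ∀ r : ℝ, (X - C r) ≠ (0 : ℝ[X]) := fun r => X_sub_C_ne_zero r
  have hX : (X : ℝ[X]) ≠ 0 := X_ne_zero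
  have hspec : spec (blowup (KssMinus (s'+1)) (t'+1))ᶜ =
      {S * T, S * T - 2 * T} + Multiset.replicate s' (-2 * T) +
        Multiset.replicate (s' + t' * ((s'+1) + (s'+1))) (0:ℝ) := by
    have hrfl : spec (blowup (KssMinus (s'+1)) (t'+1))ᶜ =
        (adjm (blowup (KssMinus (s'+1)) (t'+1))ᶜ).charpoly.roots := rfl
    rw [hrfl, SpecAux.charpoly_eq]
    have inner : ∀ u : Fin (s'+1) ⊕ Fin (s'+1),
        (∏ b : Fin (t'+1), (X - C (SpecAux.dB (s'+1) u * SpecAux.dv (t'+1) b)))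
          = (X - C (SpecAux.dB (s'+1) u * T)) * X ^ t' := by
      intro u
      have he : ∀ b : Fin t', SpecAux.dv (t'+1) b.succ = 0 := fun b => by
        simp [SpecAux.dv, Fin.succ_ne_zero b]
      have hhead : SpecAux.dv (t'+1) (0 : Fin (t'+1)) = T := by simp [SpecAux.dv, hTdef]
      have htail : (∏ b : Fin t',
          (X - C (SpecAux.dB (s'+1) u * SpecAux.dv (t'+1) b.succ))) = X ^ t' := by
        simp only [he, mul_zero, map_zero, sub_zero, Finset.prod_const, Finset.card_univ,
          Fintype.card_fin]
      rw [Fin.prod_univ_succ, hhead, htail]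
    have hinl : (∏ i : Fin (s'+1), (X - C (SpecAux.dB (s'+1) (Sum.inl i) * T)))
        = (X - C (S * T)) * X ^ s' := by
      have he : ∀ i : Fin s', SpecAux.dB (s'+1) (Sum.inl i.succ) = 0 := fun i => by
        simp [SpecAux.dB, SpecAux.dv, Fin.succ_ne_zero i]
      have hhead : SpecAux.dB (s'+1) (Sum.inl (0 : Fin (s'+1))) = S := by
        simp [SpecAux.dB, SpecAux.dv, hSdef]
      have htail : (∏ i : Fin s',
          (X - C (SpecAux.dB (s'+1) (Sum.inl i.succ) * T))) = X ^ s' := by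
        simp only [he, zero_mul, map_zero, sub_zero, Finset.prod_const, Finset.card_univ,
          Fintype.card_fin]
      rw [Fin.prod_univ_succ, hhead, htail]
    have hinr : (∏ i : Fin (s'+1), (X - C (SpecAux.dB (s'+1) (Sum.inr i) * T)))
        = (X - C (S * T - 2 * T)) * (X - C (-2 * T)) ^ s' := by
      have he : ∀ i : Fin s', SpecAux.dB (s'+1) (Sum.inr i.succ) = -2 := fun i => by
        simp [SpecAux.dB, SpecAux.dv, Fin.succ_ne_zero i]
      have hhead : SpecAux.dB (s'+1) (Sum.inr (0 : Fin (s'+1))) = S - 2 := by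
        simp [SpecAux.dB, SpecAux.dv, hSdef]
      have htail : (∏ i : Fin s',
          (X - C (SpecAux.dB (s'+1) (Sum.inr i.succ) * T))) = (X - C (-2 * T)) ^ s' := by
        simp only [he, Finset.prod_const, Finset.card_univ, Fintype.card_fin]
      have harith : (S - 2) * T = S * T - 2 * T := by ring
      rw [Fin.prod_univ_succ, hhead, htail, harith]
    have hstep : (∏ p : (Fin (s'+1) ⊕ Fin (s'+1)) × Fin (t'+1),
        (X - C (SpecAux.dB (s'+1) p.1 * SpecAux.dv (t'+1) p.2))) =
        (X - C (S * T)) * ((X - C (S * T - 2 * T)) * ((X - C (-2 * T)) ^ s' *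
          (X ^ s' * X ^ (t' * ((s'+1) + (s'+1)))))) := by
      rw [Fintype.prod_prod_type]
      rw [Finset.prod_congr rfl fun u _ => inner u]
      rw [Finset.prod_mul_distrib, Finset.prod_const, Finset.card_univ, Fintype.card_sum,
        Fintype.card_fin, ← pow_mul, Fintype.prod_sum_type, hinl, hinr]
      ring
    rw [hstep]
    rw [Polynomial.roots_mul (mul_ne_zero (ne1 _) (mul_ne_zero (ne1 _)
      (mul_ne_zero (pow_ne_zero _ (ne1 _)) (mul_ne_zero (pow_ne_zero _ hX) (pow_ne_zero _ hX)))))]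
    rw [Polynomial.roots_mul (mul_ne_zero (ne1 _)
      (mul_ne_zero (pow_ne_zero _ (ne1 _)) (mul_ne_zero (pow_ne_zero _ hX) (pow_ne_zero _ hX))))]
    rw [Polynomial.roots_mul (mul_ne_zero (pow_ne_zero _ (ne1 _))
      (mul_ne_zero (pow_ne_zero _ hX) (pow_ne_zero _ hX)))]
    rw [Polynomial.roots_mul (mul_ne_zero (pow_ne_zero _ hX) (pow_ne_zero _ hX))]
    rw [Polynomial.roots_X_sub_C, Polynomial.roots_X_sub_C, Polynomial.roots_pow,
      Polynomial.roots_pow, Polynomial.roots_pow, Polynomial.roots_X_sub_C, Polynomial.roots_X,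
      Multiset.nsmul_singleton, Multiset.nsmul_singleton, Multiset.nsmul_singleton,
      Multiset.replicate_add]
    have h2 : ({S * T, S * T - 2 * T} : Multiset ℝ) = {S * T} + {S * T - 2 * T} := rfl
    rw [h2]
    abel
  have hSpos : (0:ℝ) < S := by linarith
  have hST : (0:ℝ) < S * T := by positivity
  have hSTT : (0:ℝ) < S * T - 2 * T := by nlinarith
  have h2T : (0:ℝ) < 2 * T := by linarith
  have f1 : S * T ≠ S * T - 2 * T := by intro h; linarith
  have f1' : S * T - 2 * T ≠ S * T := Ne.symm f1
  have f2 : S * T ≠ -2 * T := by intro h; nlinarith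
  have f3 : S * T ≠ 0 := ne_of_gt hST
  have f4 : S * T - 2 * T ≠ -2 * T := by intro h; nlinarith
  have f5 : S * T - 2 * T ≠ 0 := ne_of_gt hSTT
  have f6 : -2 * T ≠ 0 := by intro h; nlinarith
  have hcons : ({S * T, S * T - 2 * T} : Multiset ℝ) = S * T ::ₘ {S * T - 2 * T} := rfl
  refine ⟨SpecAux.connected_aux _ _ hs ht, SpecAux.isreg_aux _ _ hs ht, ?_, ?_, ?_, ?_, ?_⟩
  · rw [hspec, hM]
    norm_num
  · rw [hspec]
    rw [Multiset.toFinset_add, Multiset.toFinset_add, Multiset.toFinset_replicate,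
      Multiset.toFinset_replicate, if_neg (by omega : ¬ s' = 0),
      if_neg (by omega : ¬ s' + t' * ((s'+1) + (s'+1)) = 0)]
    have h3 : ({S * T, S * T - 2 * T} : Multiset ℝ).toFinset ∪ {-2 * T} ∪ {(0:ℝ)} =
        insert (S * T) (insert (S * T - 2 * T) (insert (-2 * T) {(0:ℝ)})) := by
      ext x
      simp [or_assoc]
    rw [h3, Finset.card_insert_of_notMem (by
        simp only [Finset.mem_insert, Finset.mem_singleton]
        push_neg
        exact ⟨f1, f2, f3⟩),
      Finset.card_insert_of_notMem (by
        simp only [Finset.mem_insert, Finset.mem_singleton]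
        push_neg
        exact ⟨f4, f5⟩),
      Finset.card_insert_of_notMem (by
        simp only [Finset.mem_singleton]
        exact f6), Finset.card_singleton]
  · rw [hspec, Multiset.count_add, Multiset.count_add, Multiset.count_replicate,
      Multiset.count_replicate, if_neg (Ne.symm f2), if_neg (Ne.symm f3), hcons,
      Multiset.count_cons_self, Multiset.count_singleton, if_neg f1]
  · rw [hspec, Multiset.count_add, Multiset.count_add, Multiset.count_replicate,
      Multiset.count_replicate, if_neg (Ne.symm f4), if_neg (Ne.symm f5), hcons,
      Multiset.count_cons_of_ne f1', Multiset.count_singleton, if_pos rfl]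
  · rw [hspec, Multiset.count_add, Multiset.count_add, Multiset.count_replicate,
      Multiset.count_replicate, if_neg f6, if_pos rfl, hcons,
      Multiset.count_cons_of_ne (Ne.symm f3), Multiset.count_singleton, if_neg (Ne.symm f5)]
    rw [← hM] at *
    omega
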